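/- The set X = { (x, t + sin x) : t ∈ πℤ, x ∈ ℝ } ⊆ ℝ² is closed and has no affine points: there is no point p ∈ X and open neighborhood U of p such that U ∩ X = U ∩ H for some affine line or affine subspace H of ℝ². -/

import Mathlib

/-- The set `X = {(x, t + sin x) : t ∈ πℤ, x ∈ ℝ}`. -/
def sinSet : Set (ℝ × ℝ) :=
  {p : ℝ × ℝ | ∃ (k : ℤ) (x : ℝ), p = (x, k * Real.pi + Real.sin x)}

lemma abs_sin_sub_sin_le (a b : ℝ) : |Real.sin a - Real.sin b| ≤ |a - b| := by
  rw [Real.sin_sub_sin, abs_mul, abs_mul, abs_two]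
  have h1 : |Real.sin ((a - b) / 2)| ≤ |(a - b) / 2| := Real.abs_sin_le_abs
  have h2 : |Real.cos ((a + b) / 2)| ≤ 1 := Real.abs_cos_le_one _
  have h3 : |(a - b) / 2| = |a - b| / 2 := by rw [abs_div]; norm_num
  nlinarith [abs_nonneg (Real.sin ((a - b) / 2)), abs_nonneg (Real.cos ((a + b) / 2)),
    abs_nonneg (a - b)]

lemma cos_lt_one_of (t : ℝ) (ht0 : 0 < t) (ht1 : t ≤ 1) : Real.cos t < 1 := by
  rcases lt_or_eq_of_le (Real.cos_le_one t) with h | h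
  · exact h
  rcases (Real.cos_eq_one_iff t).1 h with ⟨n, hn⟩
  have hπ := Real.pi_gt_three
  rcases lt_trichotomy n 0 with h1 | h1 | h1
  · have h2 : ((n : ℝ)) ≤ -1 := by exact_mod_cast (by omega : n ≤ -1)
    nlinarith
  · rw [h1] at hn; simp at hn; linarith
  · have h2 : (1 : ℝ) ≤ (n : ℝ) := by exact_mod_cast h1
    nlinarith

/-- `X = {(x, t + sin x) : t ∈ πℤ, x ∈ ℝ}` is closed and has no affine
points. -/
theorem stmt12 :
    IsClosed sinSet ∧
      ∀ p ∈ sinSet, ∀ U : Set (ℝ × ℝ), IsOpen U → p ∈ U →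
        ∀ H : AffineSubspace ℝ (ℝ × ℝ), U ∩ sinSet ≠ U ∩ (H : Set (ℝ × ℝ)) := by
  have hπ : (0 : ℝ) < Real.pi := Real.pi_pos
  constructor
  · -- Closedness
    have hset : sinSet = (fun p : ℝ × ℝ => (p.2 - Real.sin p.1) / Real.pi) ⁻¹'
        (Set.range ((↑) : ℤ → ℝ)) := by
      ext p
      constructor
      · rintro ⟨k, x, rfl⟩
        exact ⟨k, by field_simp; ring⟩
      · rintro ⟨k, hk⟩
        refine ⟨k, p.1, ?_⟩
        have h1 : p.2 - Real.sin p.1 = k * Real.pi := by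
          field_simp at hk; linarith
        have h2 : p.2 = k * Real.pi + Real.sin p.1 := by linarith
        exact Prod.ext rfl h2
    rw [hset]
    exact (Int.isClosedEmbedding_coe_real.isClosed_range).preimage (by fun_prop)
  · -- No affine points
    rintro p ⟨k, x₀, rfl⟩ U hU hpU H hEq
    set p : ℝ × ℝ := (x₀, k * Real.pi + Real.sin x₀) with hp
    have hpH : p ∈ (H : Set (ℝ × ℝ)) := (hEq ▸ ⟨hpU, ⟨k, x₀, rfl⟩⟩ : p ∈ U ∩ H).2
    obtain ⟨ε, hε, hball⟩ := Metric.isOpen_iff.mp hU p hpU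
    -- nearby points of the curve are in H
    have hHmem : ∀ δ : ℝ, |δ| < ε →
        ((x₀ + δ, k * Real.pi + Real.sin (x₀ + δ)) : ℝ × ℝ) ∈ (H : Set (ℝ × ℝ)) := by
      intro δ hδ
      have hqU : ((x₀ + δ, k * Real.pi + Real.sin (x₀ + δ)) : ℝ × ℝ) ∈ U := by
        apply hball
        rw [Metric.mem_ball, Prod.dist_eq]
        apply max_lt
        · simpa [Real.dist_eq, hp] using hδ
        · rw [Real.dist_eq]
          have h1 : (k * Real.pi + Real.sin (x₀ + δ)) - (k * Real.pi + Real.sin x₀)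
              = Real.sin (x₀ + δ) - Real.sin x₀ := by ring
          rw [h1]
          calc |Real.sin (x₀ + δ) - Real.sin x₀| ≤ |x₀ + δ - x₀| := abs_sin_sub_sin_le _ _
            _ = |δ| := by ring_nf
            _ < ε := hδ
      have hmem : ((x₀ + δ, k * Real.pi + Real.sin (x₀ + δ)) : ℝ × ℝ) ∈ U ∩ sinSet :=
        ⟨hqU, ⟨k, x₀ + δ, rfl⟩⟩
      exact (hEq ▸ hmem).2
    -- difference vectors are in the direction
    have hdirmem : ∀ δ : ℝ, |δ| < ε →
        ((δ, Real.sin (x₀ + δ) - Real.sin x₀) : ℝ × ℝ) ∈ H.direction := by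
      intro δ hδ
      have h1 := AffineSubspace.vsub_mem_direction (hHmem δ hδ) hpH
      have h2 : ((x₀ + δ, k * Real.pi + Real.sin (x₀ + δ)) : ℝ × ℝ) -ᵥ p
          = ((δ, Real.sin (x₀ + δ) - Real.sin x₀) : ℝ × ℝ) := by
        rw [hp]
        simp [Prod.ext_iff]
      rwa [h2] at h1
    -- (0,1) is not in the direction
    have h01 : ((0, 1) : ℝ × ℝ) ∉ H.direction := by
      intro hmem
      set η : ℝ := min (ε / 2) (Real.pi / 2) with hη
      have hη0 : 0 < η := lt_min (by linarith) (by linarith)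
      have hηε : η < ε := lt_of_le_of_lt (min_le_left _ _) (by linarith)
      have hηπ : η < Real.pi := lt_of_le_of_lt (min_le_right _ _) (by linarith)
      have hq'H : ((0, η) : ℝ × ℝ) +ᵥ p ∈ (H : Set (ℝ × ℝ)) := by
        apply AffineSubspace.vadd_mem_of_mem_direction _ hpH
        have hs := H.direction.smul_mem η hmem
        simpa using hs
      have hq'eq : ((0, η) : ℝ × ℝ) +ᵥ p = (x₀, η + (k * Real.pi + Real.sin x₀)) := by
        rw [hp]
        simp [Prod.ext_iff, vadd_eq_add]
      have hq'U : ((0, η) : ℝ × ℝ) +ᵥ p ∈ U := by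
        apply hball
        rw [Metric.mem_ball, hq'eq, Prod.dist_eq]
        apply max_lt
        · simpa [Real.dist_eq, hp] using hε
        · rw [Real.dist_eq]
          have h1 : η + (k * Real.pi + Real.sin x₀) - (k * Real.pi + Real.sin x₀) = η := by
            ring
          rw [h1, abs_of_pos hη0]; exact hηε
      have hmem2 : ((0, η) : ℝ × ℝ) +ᵥ p ∈ U ∩ sinSet := hEq ▸ ⟨hq'U, hq'H⟩
      obtain ⟨m, x, hx⟩ := hmem2.2
      rw [hq'eq, Prod.ext_iff] at hx
      obtain ⟨hx1, hx2⟩ := hx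
      simp only at hx1 hx2
      subst hx1
      have hηeq : η = ((m - k : ℤ) : ℝ) * Real.pi := by push_cast; linarith
      have h1 : (0 : ℝ) < ((m - k : ℤ) : ℝ) * Real.pi := hηeq ▸ hη0
      have h2 : ((m - k : ℤ) : ℝ) * Real.pi < 1 * Real.pi := by
        rw [one_mul]; exact hηeq ▸ hηπ
      have h3 : (0 : ℝ) < ((m - k : ℤ) : ℝ) := by nlinarith
      have h4 : ((m - k : ℤ) : ℝ) < 1 := lt_of_mul_lt_mul_right h2 hπ.le
      have h5 : (0 : ℤ) < m - k := by exact_mod_cast h3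
      have h6 : (m - k : ℤ) < 1 := by exact_mod_cast h4
      omega
    -- determinant vanishing: any two curve difference vectors are parallel
    have hdet : ∀ δ₁ δ₂ : ℝ, |δ₁| < ε → |δ₂| < ε →
        δ₁ * (Real.sin (x₀ + δ₂) - Real.sin x₀)
          = δ₂ * (Real.sin (x₀ + δ₁) - Real.sin x₀) := by
      intro δ₁ δ₂ h1 h2
      by_contra hne
      set s₁ := Real.sin (x₀ + δ₁) - Real.sin x₀ with hs₁
      set s₂ := Real.sin (x₀ + δ₂) - Real.sin x₀ with hs₂
      set d : ℝ := δ₁ * s₂ - δ₂ * s₁ with hd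
      have hd0 : d ≠ 0 := sub_ne_zero.mpr hne
      have key : ((0, 1) : ℝ × ℝ)
          = (-δ₂ / d) • ((δ₁, s₁) : ℝ × ℝ) + (δ₁ / d) • ((δ₂, s₂) : ℝ × ℝ) := by
        rw [Prod.ext_iff]
        constructor
        · simp only [Prod.fst_add, Prod.smul_fst, smul_eq_mul]
          field_simp
          ring
        · simp only [Prod.snd_add, Prod.smul_snd, smul_eq_mul]
          field_simp
          ring
      apply h01
      rw [key]
      exact H.direction.add_mem
        (H.direction.smul_mem _ (hdirmem δ₁ h1))
        (H.direction.smul_mem _ (hdirmem δ₂ h2))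
    -- trigonometric contradiction
    set t : ℝ := min (ε / 2) 1 with ht
    have ht0 : 0 < t := lt_min (by linarith) one_pos
    have ht1 : t ≤ 1 := min_le_right _ _
    have htε : |t| < ε := by
      rw [abs_of_pos ht0]
      exact lt_of_le_of_lt (min_le_left _ _) (by linarith)
    have htε' : |(-t)| < ε := by rwa [abs_neg]
    have ht2ε : |t / 2| < ε := by
      rw [abs_of_pos (by linarith)]
      rw [abs_of_pos ht0] at htε
      linarith
    -- Step 1: sin x₀ = 0
    have hA := hdet t (-t) htε htε'
    have hcos_t : Real.cos t < 1 := cos_lt_one_of t ht0 ht1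
    have hsinx₀ : Real.sin x₀ = 0 := by
      have hexp : Real.sin (x₀ + -t) = Real.sin x₀ * Real.cos t - Real.cos x₀ * Real.sin t := by
        rw [show x₀ + -t = x₀ - t by ring, Real.sin_sub]
      have hexp2 : Real.sin (x₀ + t) = Real.sin x₀ * Real.cos t + Real.cos x₀ * Real.sin t :=
        Real.sin_add x₀ t
      rw [hexp, hexp2] at hA
      have hfac : t * (Real.sin x₀ * (Real.cos t - 1)) = 0 := by nlinarith
      have hfac2 : Real.sin x₀ * (Real.cos t - 1) = 0 :=
        (mul_eq_zero.mp hfac).resolve_left (ne_of_gt ht0)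
      exact (mul_eq_zero.mp hfac2).resolve_right (by intro h; linarith)
    -- Step 2: contradiction
    have hB := hdet t (t / 2) htε ht2ε
    have hcosx₀ : Real.cos x₀ ≠ 0 := by
      intro h
      have := Real.sin_sq_add_cos_sq x₀
      rw [hsinx₀, h] at this
      norm_num at this
    have hexp1 : Real.sin (x₀ + t) = Real.cos x₀ * Real.sin t := by
      rw [Real.sin_add, hsinx₀]; ring
    have hexp2 : Real.sin (x₀ + t / 2) = Real.cos x₀ * Real.sin (t / 2) := by
      rw [Real.sin_add, hsinx₀]; ring
    have hsin_t : Real.sin t = 2 * Real.sin (t / 2) * Real.cos (t / 2) := by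
      rw [show t = 2 * (t / 2) by ring, Real.sin_two_mul]
      ring_nf
    rw [hexp1, hexp2, hsinx₀, hsin_t] at hB
    have hsin_half_pos : 0 < Real.sin (t / 2) := by
      apply Real.sin_pos_of_pos_of_lt_pi (by linarith)
      have := Real.pi_gt_three
      linarith
    have hcos_half : Real.cos (t / 2) < 1 := cos_lt_one_of (t / 2) (by linarith) (by linarith)
    have hfinal : t * Real.cos x₀ * Real.sin (t / 2) * (1 - Real.cos (t / 2)) = 0 := by
      nlinarith
    rcases mul_eq_zero.mp hfinal with h | h
    · rcases mul_eq_zero.mp h with h' | h'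
      · rcases mul_eq_zero.mp h' with h'' | h''
        · exact absurd h'' (ne_of_gt ht0)
        · exact hcosx₀ h''
      · exact absurd h' (ne_of_gt hsin_half_pos)
    · linarith
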